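/- arXiv:2003.14387 — 3 statements merged into one kernel-verified Lean document; each statement's English description precedes it below -/
import Mathlib

section
/- Let H be a complex Hilbert space, A a positive bounded self-adjoint operator on H, and X a bounded linear operator on H satisfying AX = X*A. Then for every x ∈ H, ⟨AXx, Xx⟩ ≤ ‖X‖² ⟨Ax, x⟩. -/
open scoped InnerProductSpace

/-- If `A` is a positive bounded self-adjoint operator and `X` a bounded
operator with `A X = X* A`, then `⟨A X x, X x⟩ ≤ ‖X‖² ⟨A x, x⟩` for every `x`. -/
theorem stmt0 {H : Type*} [NormedAddCommGroup H] [InnerProductSpace ℂ H] [CompleteSpace H]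
    (A X : H →L[ℂ] H) (hA : IsSelfAdjoint A)
    (hApos : ∀ x : H, 0 ≤ (⟪A x, x⟫_ℂ).re)
    (hsym : A ∘L X = (ContinuousLinearMap.adjoint X) ∘L A) :
    ∀ x : H, (⟪A (X x), X x⟫_ℂ).re ≤ ‖X‖ ^ 2 * (⟪A x, x⟫_ℂ).re := by
  have hre : ∀ z : ℂ, z.re ≤ ‖z‖ := fun z => by simpa using RCLike.re_le_norm (K := ℂ) z
  have hAsymm : ∀ u v : H, ⟪A u, v⟫_ℂ = ⟪u, A v⟫_ℂ := fun u v =>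
    ((ContinuousLinearMap.isSelfAdjoint_iff_isSymmetric).mp hA) u v
  -- the semi-inner-product core given by the form (u,v) ↦ ⟪A u, v⟫
  let c : PreInnerProductSpace.Core ℂ H :=
  { inner := fun u v => ⟪A u, v⟫_ℂ
    conj_inner_symm := by
      intro u v
      show (starRingEnd ℂ) ⟪A v, u⟫_ℂ = ⟪A u, v⟫_ℂ
      rw [← inner_conj_symm, hAsymm]
      simp
    re_inner_nonneg := by intro u; simpa using hApos u
    add_left := by intro u v w; simp [inner_add_left]
    smul_left := by intro u v r; simp [inner_smul_left, mul_comm] }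
  have CS : ∀ u v : H, ‖⟪A u, v⟫_ℂ‖ * ‖⟪A v, u⟫_ℂ‖ ≤ (⟪A u, u⟫_ℂ).re * (⟪A v, v⟫_ℂ).re := by
    intro u v
    have := @InnerProductSpace.Core.inner_mul_inner_self_le ℂ H _ _ _ c u v
    exact this
  -- the key shift identity
  have hshift : ∀ u v : H, ⟪A (X u), v⟫_ℂ = ⟪A u, X v⟫_ℂ := by
    intro u v
    have h1 : A (X u) = (ContinuousLinearMap.adjoint X) (A u) := by
      have := congrArg (fun T : H →L[ℂ] H => T u) hsym
      simpa using this
    rw [h1, ContinuousLinearMap.adjoint_inner_left]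
  intro x
  by_cases hX0 : X = 0
  · simpa [hX0] using mul_nonneg (by positivity) (hApos x)
  have hXpos : (0:ℝ) < ‖X‖ := norm_pos_iff.mpr hX0
  set a : ℕ → ℝ := fun n => (⟪A ((X ^ n) x), (X ^ n) x⟫_ℂ).re with ha
  have hgoal : a 1 ≤ ‖X‖ ^ 2 * a 0 → (⟪A (X x), X x⟫_ℂ).re ≤ ‖X‖ ^ 2 * (⟪A x, x⟫_ℂ).re := by
    intro h
    simpa [ha] using h
  apply hgoal
  have hnn : ∀ n, 0 ≤ a n := fun n => hApos _
  have hpow : ∀ n : ℕ, (X ^ (n + 1)) x = X ((X ^ n) x) := by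
    intro n
    rw [pow_succ']
    rfl
  -- log-convexity: a (n+1)^2 ≤ a n * a (n+2)
  have hlc : ∀ n : ℕ, a (n + 1) ^ 2 ≤ a n * a (n + 2) := by
    intro n
    have hz : ⟪A ((X ^ (n+1)) x), (X ^ (n+1)) x⟫_ℂ = ⟪A ((X ^ n) x), (X ^ (n+2)) x⟫_ℂ := by
      rw [hpow n, hshift, hpow (n+1), hpow n]
    have hz' : (⟪A ((X ^ (n+2)) x), (X ^ n) x⟫_ℂ).re = a (n + 1) := by
      have h : ⟪A ((X ^ (n+2)) x), (X ^ n) x⟫_ℂ =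
          (starRingEnd ℂ) ⟪A ((X ^ n) x), (X ^ (n+2)) x⟫_ℂ := by
        rw [← inner_conj_symm, hAsymm]
      rw [h, Complex.conj_re, ← hz]
    have h1 : a (n + 1) ≤ ‖⟪A ((X ^ n) x), (X ^ (n+2)) x⟫_ℂ‖ := by
      calc a (n + 1) = (⟪A ((X ^ n) x), (X ^ (n+2)) x⟫_ℂ).re := by rw [← hz]
        _ ≤ ‖⟪A ((X ^ n) x), (X ^ (n+2)) x⟫_ℂ‖ := hre _
    have h2 : a (n + 1) ≤ ‖⟪A ((X ^ (n+2)) x), (X ^ n) x⟫_ℂ‖ := by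
      calc a (n + 1) = (⟪A ((X ^ (n+2)) x), (X ^ n) x⟫_ℂ).re := hz'.symm
        _ ≤ ‖⟪A ((X ^ (n+2)) x), (X ^ n) x⟫_ℂ‖ := hre _
    calc a (n+1) ^ 2 = a (n+1) * a (n+1) := sq (a (n+1))
      _ ≤ ‖⟪A ((X ^ n) x), (X ^ (n+2)) x⟫_ℂ‖ * ‖⟪A ((X ^ (n+2)) x), (X ^ n) x⟫_ℂ‖ :=
          mul_le_mul h1 h2 (hnn _) (norm_nonneg _)
      _ ≤ a n * a (n + 2) := CS _ _
  have hXn : ∀ n : ℕ, ‖(X ^ n) x‖ ≤ ‖X‖ ^ n * ‖x‖ := by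
    intro n
    induction n with
    | zero => simp
    | succ n ih =>
      calc ‖(X ^ (n+1)) x‖ = ‖X ((X ^ n) x)‖ := by rw [hpow]
        _ ≤ ‖X‖ * ‖(X ^ n) x‖ := X.le_opNorm _
        _ ≤ ‖X‖ * (‖X‖ ^ n * ‖x‖) := mul_le_mul_of_nonneg_left ih (norm_nonneg X)
        _ = ‖X‖ ^ (n+1) * ‖x‖ := by ring
  -- growth bound
  have hgrow : ∀ n : ℕ, a n ≤ ‖A‖ * ‖x‖ ^ 2 * (‖X‖ ^ 2) ^ n := by
    intro n
    have h1 : a n ≤ ‖A ((X ^ n) x)‖ * ‖(X ^ n) x‖ :=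
      (hre _).trans (mul_le_mul_of_nonneg_right (le_refl _) (norm_nonneg _) |>.trans'
        (norm_inner_le_norm _ _))
    have h2 : ‖A ((X ^ n) x)‖ ≤ ‖A‖ * ‖(X ^ n) x‖ := A.le_opNorm _
    have h3 : ‖(X ^ n) x‖ ≤ ‖X‖ ^ n * ‖x‖ := hXn n
    have h4 : a n ≤ ‖A‖ * (‖X‖ ^ n * ‖x‖) ^ 2 := by
      calc a n ≤ ‖A ((X ^ n) x)‖ * ‖(X ^ n) x‖ := h1
        _ ≤ (‖A‖ * ‖(X ^ n) x‖) * ‖(X ^ n) x‖ :=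
            mul_le_mul_of_nonneg_right h2 (norm_nonneg _)
        _ = ‖A‖ * (‖(X ^ n) x‖ * ‖(X ^ n) x‖) := by ring
        _ ≤ ‖A‖ * ((‖X‖ ^ n * ‖x‖) * (‖X‖ ^ n * ‖x‖)) :=
            mul_le_mul_of_nonneg_left
              (mul_le_mul h3 h3 (norm_nonneg _) (by positivity)) (norm_nonneg A)
        _ = ‖A‖ * (‖X‖ ^ n * ‖x‖) ^ 2 := by ring
    calc a n ≤ ‖A‖ * (‖X‖ ^ n * ‖x‖) ^ 2 := h4
      _ = ‖A‖ * ‖x‖ ^ 2 * (‖X‖ ^ 2) ^ n := by ring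
  -- chain: a 1 * a n ≤ a 0 * a (n+1)
  have hchain : ∀ n : ℕ, a 1 * a n ≤ a 0 * a (n + 1) := by
    intro n
    induction n with
    | zero => rw [mul_comm]
    | succ n ih =>
      rcases eq_or_lt_of_le (hnn 1) with h1 | h1
      · rw [← h1, zero_mul]; exact mul_nonneg (hnn 0) (hnn (n+2))
      rcases eq_or_lt_of_le (hnn (n+1)) with h2 | h2
      · rw [← h2, mul_zero]; exact mul_nonneg (hnn 0) (hnn (n+2))
      have key : (a 1 * a (n+1)) * (a 1 * a (n+1)) ≤ (a 0 * a (n+2)) * (a 1 * a (n+1)) := by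
        nlinarith [hlc n, ih, hnn 0, hnn 1, hnn n, hnn (n+1), hnn (n+2),
          mul_le_mul_of_nonneg_left (hlc n) (mul_nonneg (hnn 1) (hnn 1)),
          mul_le_mul_of_nonneg_right ih (mul_nonneg (hnn 1) (hnn (n+2)))]
      exact le_of_mul_le_mul_right key (mul_pos h1 h2)
  -- iterate: a 1 ^ n * a 0 ≤ a 0 ^ n * a n
  have hiter : ∀ n : ℕ, a 1 ^ n * a 0 ≤ a 0 ^ n * a n := by
    intro n
    induction n with
    | zero => simp [ha]
    | succ n ih =>
      calc a 1 ^ (n+1) * a 0 = a 1 * (a 1 ^ n * a 0) := by ring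
        _ ≤ a 1 * (a 0 ^ n * a n) := mul_le_mul_of_nonneg_left ih (hnn 1)
        _ = a 0 ^ n * (a 1 * a n) := by ring
        _ ≤ a 0 ^ n * (a 0 * a (n+1)) := mul_le_mul_of_nonneg_left (hchain n)
            (pow_nonneg (hnn 0) n)
        _ = a 0 ^ (n+1) * a (n+1) := by ring
  -- conclude
  rcases eq_or_lt_of_le (hnn 0) with h0 | h0
  · have h1 : a 1 ^ 2 ≤ a 0 * a 2 := hlc 0
    have : a 1 = 0 := by nlinarith [hnn 1, hnn 2]
    rw [this, ← h0, mul_zero]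
  by_contra hcon
  push_neg at hcon
  have hq : 1 < a 1 / (‖X‖ ^ 2 * a 0) := by
    rw [one_lt_div (by positivity)]
    exact hcon
  obtain ⟨n, hn⟩ := pow_unbounded_of_one_lt (‖A‖ * ‖x‖ ^ 2 / a 0) hq
  have hb : (a 1 / (‖X‖ ^ 2 * a 0)) ^ n ≤ ‖A‖ * ‖x‖ ^ 2 / a 0 := by
    rw [div_pow, div_le_div_iff₀ (by positivity) h0]
    calc a 1 ^ n * a 0 ≤ a 0 ^ n * a n := hiter n
      _ ≤ a 0 ^ n * (‖A‖ * ‖x‖ ^ 2 * (‖X‖ ^ 2) ^ n) :=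
          mul_le_mul_of_nonneg_left (hgrow n) (pow_nonneg (hnn 0) n)
      _ = ‖A‖ * ‖x‖ ^ 2 * (‖X‖ ^ 2 * a 0) ^ n := by rw [mul_pow]; ring
  exact absurd hb (not_le.mpr hn)
end

section
/- Let H be a complex Hilbert space, A a positive bounded self-adjoint operator on H, and X a bounded linear operator satisfying AX = X*A. Then for every x ∈ H with ⟨Ax,x⟩ ≠ 0 and every n ≥ 1, (⟨AXx,Xx⟩ / ⟨Ax,x⟩)^n ≤ ⟨AX^n x, X^n x⟩ / ⟨Ax,x⟩, provided all intermediate quantities ⟨AX^k x, X^k x⟩ are nonzero for 0 ≤ k ≤ n-1. -/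
open scoped InnerProductSpace

section Aux

variable {H : Type*} [NormedAddCommGroup H] [InnerProductSpace ℂ H] [CompleteSpace H]

/-- Semi-inner product core associated with a positive self-adjoint operator. -/
noncomputable def auxCore (A : H →L[ℂ] H) (hA : IsSelfAdjoint A)
    (hApos : ∀ x : H, 0 ≤ (⟪A x, x⟫_ℂ).re) : PreInnerProductSpace.Core ℂ H where
  inner u v := ⟪A u, v⟫_ℂ
  conj_inner_symm u v := by
    have hAdj := ContinuousLinearMap.isSelfAdjoint_iff'.mp hA
    show (starRingEnd ℂ) ⟪A v, u⟫_ℂ = ⟪A u, v⟫_ℂ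
    rw [← inner_conj_symm (A v) u, starRingEnd_self_apply]
    conv_rhs => rw [← hAdj]
    rw [ContinuousLinearMap.adjoint_inner_left]
  re_inner_nonneg u := hApos u
  add_left u v w := by simp [inner_add_left]
  smul_left u v r := by simp [inner_smul_left]; ring

theorem aux_cauchy_schwarz (A : H →L[ℂ] H) (hA : IsSelfAdjoint A)
    (hApos : ∀ x : H, 0 ≤ (⟪A x, x⟫_ℂ).re) (u v : H) :
    ‖⟪A u, v⟫_ℂ‖ * ‖⟪A v, u⟫_ℂ‖ ≤ (⟪A u, u⟫_ℂ).re * (⟪A v, v⟫_ℂ).re :=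
  @InnerProductSpace.Core.inner_mul_inner_self_le ℂ H _ _ _ (auxCore A hA hApos) u v

end Aux

/-- telescoping chain of quotients along iterates of `X`. -/
theorem stmt1 {H : Type*} [NormedAddCommGroup H] [InnerProductSpace ℂ H] [CompleteSpace H]
    (A X : H →L[ℂ] H) (hA : IsSelfAdjoint A)
    (hApos : ∀ x : H, 0 ≤ (⟪A x, x⟫_ℂ).re)
    (hsym : A ∘L X = (ContinuousLinearMap.adjoint X) ∘L A)
    (x : H) (n : ℕ) (hn : 1 ≤ n)
    (hx : ⟪A x, x⟫_ℂ ≠ 0)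
    (hnz : ∀ k : ℕ, k ≤ n - 1 → ⟪A ((X ^ k) x), (X ^ k) x⟫_ℂ ≠ 0) :
    ((⟪A (X x), X x⟫_ℂ).re / (⟪A x, x⟫_ℂ).re) ^ n
      ≤ (⟪A ((X ^ n) x), (X ^ n) x⟫_ℂ).re / (⟪A x, x⟫_ℂ).re := by
  have hAdj := ContinuousLinearMap.isSelfAdjoint_iff'.mp hA
  have hAsym : ∀ v w : H, ⟪A v, w⟫_ℂ = ⟪v, A w⟫_ℂ := by
    intro v w
    conv_lhs => rw [← hAdj]
    exact ContinuousLinearMap.adjoint_inner_left A w v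
  set u : ℕ → H := fun k => (X ^ k) x with hu
  set f : ℕ → ℝ := fun k => (⟪A (u k), u k⟫_ℂ).re with hf
  have hu0 : u 0 = x := by simp [hu]
  have hu_succ : ∀ k, u (k + 1) = X (u k) := by
    intro k
    simp [hu, pow_succ', ContinuousLinearMap.mul_apply]
    rw [← Function.iterate_succ_apply, Function.iterate_succ_apply']
  -- energies are real
  have hreal : ∀ v : H, (⟪A v, v⟫_ℂ).im = 0 := by
    intro v
    have h1 : ⟪A v, v⟫_ℂ = (starRingEnd ℂ) ⟪A v, v⟫_ℂ := by
      nth_rewrite 2 [hAsym v v]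
      rw [inner_conj_symm]
    have := congrArg Complex.im h1
    simp only [Complex.conj_im] at this
    linarith
  have hne : ∀ v : H, ⟪A v, v⟫_ℂ ≠ 0 → 0 < (⟪A v, v⟫_ℂ).re := by
    intro v hv
    rcases lt_or_eq_of_le (hApos v) with h | h
    · exact h
    · exact absurd (Complex.ext h.symm (hreal v)) hv
  have hfnonneg : ∀ k, 0 ≤ f k := fun k => hApos (u k)
  have hfpos : ∀ k, k ≤ n - 1 → 0 < f k := fun k hk => hne (u k) (hnz k hk)
  have hf0pos : 0 < f 0 := by rw [hf]; simp only [hu0]; exact hne x hx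
  -- A (X v) = X* (A v)
  have hAX : ∀ v : H, A (X v) = (ContinuousLinearMap.adjoint X) (A v) := by
    intro v
    exact congrArg (fun T : H →L[ℂ] H => T v) hsym
  have hkey : ∀ v : H, ⟪A (X v), X v⟫_ℂ = ⟪A v, X (X v)⟫_ℂ := by
    intro v
    rw [hAX v, ContinuousLinearMap.adjoint_inner_left]
  -- key inequality: f(k+1)^2 ≤ f k * f (k+2)
  have hstep : ∀ k, f (k + 1) ^ 2 ≤ f k * f (k + 2) := by
    intro k
    have hcs := aux_cauchy_schwarz A hA hApos (u k) (u (k + 2))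
    have hz : ⟪A (u k), u (k + 2)⟫_ℂ = ((f (k + 1) : ℝ) : ℂ) := by
      have h2 : u (k + 2) = X (X (u k)) := by
        rw [show k + 2 = (k + 1) + 1 from rfl, hu_succ, hu_succ]
      rw [h2, ← hkey (u k)]
      have him := hreal (X (u k))
      have hre : (⟪A (X (u k)), X (u k)⟫_ℂ).re = f (k + 1) := by
        simp only [hf]; rw [hu_succ]
      exact Complex.ext (by simpa using hre) (by simpa using him)
    have hz2 : ⟪A (u (k + 2)), u k⟫_ℂ = ((f (k + 1) : ℝ) : ℂ) := by
      rw [hAsym, ← inner_conj_symm, hz]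
      simp [Complex.conj_ofReal]
    rw [hz, hz2] at hcs
    have hnorm : ‖((f (k + 1) : ℝ) : ℂ)‖ = f (k + 1) := by
      rw [Complex.norm_real, Real.norm_eq_abs, abs_of_nonneg (hfnonneg (k + 1))]
    rw [hnorm] at hcs
    calc f (k + 1) ^ 2 = f (k + 1) * f (k + 1) := pow_two _
      _ ≤ (⟪A (u k), u k⟫_ℂ).re * (⟪A (u (k+2)), u (k+2)⟫_ℂ).re := hcs
      _ = f k * f (k + 2) := rfl
  -- ratio monotonicity: f 1 / f 0 ≤ f (k+1) / f k for k ≤ n - 1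
  have hratio : ∀ k, k ≤ n - 1 → f 1 / f 0 ≤ f (k + 1) / f k := by
    intro k hk
    induction k with
    | zero => exact le_refl _
    | succ m ih =>
      have hm : m ≤ n - 1 := Nat.le_of_succ_le hk
      have h1 : f 1 / f 0 ≤ f (m + 1) / f m := ih hm
      have hfm : 0 < f m := hfpos m hm
      have hfm1 : 0 < f (m + 1) := hfpos (m + 1) hk
      have h2 : f (m + 1) / f m ≤ f (m + 2) / f (m + 1) := by
        rw [div_le_div_iff₀ hfm hfm1]
        have := hstep m
        nlinarith [hstep m]
      exact le_trans h1 h2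
  -- main induction
  have main : ∀ m, 1 ≤ m → m ≤ n → (f 1 / f 0) ^ m ≤ f m / f 0 := by
    intro m hm1 hmn
    induction m with
    | zero => omega
    | succ p ih =>
      rcases Nat.eq_or_lt_of_le hm1 with h | h
      · simp [← h]
      · have hp1 : 1 ≤ p := by omega
        have hpn : p ≤ n := by omega
        have hpn1 : p ≤ n - 1 := by omega
        have hihp := ih hp1 hpn
        have hfp : 0 < f p := hfpos p hpn1
        have hr := hratio p hpn1
        have h10 : 0 ≤ f 1 / f 0 := div_nonneg (hfnonneg 1) (le_of_lt hf0pos)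
        calc (f 1 / f 0) ^ (p + 1) = (f 1 / f 0) ^ p * (f 1 / f 0) := pow_succ _ _
          _ ≤ (f p / f 0) * (f (p + 1) / f p) := by
              apply mul_le_mul hihp hr h10
              exact div_nonneg (hfnonneg p) (le_of_lt hf0pos)
          _ = f (p + 1) / f 0 := by
              field_simp
  have h1eq : f 1 = (⟪A (X x), X x⟫_ℂ).re := by
    simp only [hf]
    rw [show (1:ℕ) = 0 + 1 from rfl, hu_succ, hu0]
  have hneq : f n = (⟪A ((X ^ n) x), (X ^ n) x⟫_ℂ).re := rfl
  have h0eq : f 0 = (⟪A x, x⟫_ℂ).re := by simp only [hf]; rw [hu0]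
  rw [← h1eq, ← hneq, ← h0eq]
  exact main n hn (le_refl n)
end

section
/- Let H be a complex Hilbert space, A a positive bounded self-adjoint operator, and T a bounded operator with AT = T*A. Then there exists a constant C > 0 such that T*AT ≤ C·A in the operator order, i.e., ⟨ATx, Tx⟩ ≤ C⟨Ax, x⟩ for all x ∈ H. -/
open scoped InnerProductSpace

/-- symmetrizable operators are bounded in the weaker seminorm:
there is `C > 0` with `T* A T ≤ C A`, i.e. `⟨A T x, T x⟩ ≤ C ⟨A x, x⟩`. -/
theorem stmt3 {H : Type*} [NormedAddCommGroup H] [InnerProductSpace ℂ H] [CompleteSpace H]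
    (A T : H →L[ℂ] H) (hA : IsSelfAdjoint A)
    (hApos : ∀ x : H, 0 ≤ (⟪A x, x⟫_ℂ).re)
    (hsym : A ∘L T = (ContinuousLinearMap.adjoint T) ∘L A) :
    ∃ C : ℝ, 0 < C ∧ ∀ x : H, (⟪A (T x), T x⟫_ℂ).re ≤ C * (⟪A x, x⟫_ℂ).re := by
  have hsymm : ∀ x y : H, ⟪A x, y⟫_ℂ = ⟪x, A y⟫_ℂ := fun x y =>
    (ContinuousLinearMap.isSelfAdjoint_iff_isSymmetric.mp hA) x y
  -- Cauchy-Schwarz for the semidefinite form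
  let c : PreInnerProductSpace.Core ℂ H :=
  { inner := fun x y => ⟪A x, y⟫_ℂ
    conj_inner_symm := fun x y => by
      show (starRingEnd ℂ) ⟪A y, x⟫_ℂ = ⟪A x, y⟫_ℂ
      rw [inner_conj_symm, hsymm]
    re_inner_nonneg := hApos
    add_left := fun x y z => by
      show ⟪A (x + y), z⟫_ℂ = ⟪A x, z⟫_ℂ + ⟪A y, z⟫_ℂ
      rw [map_add, inner_add_left]
    smul_left := fun x y r => by
      show ⟪A (r • x), y⟫_ℂ = (starRingEnd ℂ) r * ⟪A x, y⟫_ℂ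
      rw [map_smul, inner_smul_left] }
  have hCS : ∀ x y : H, ‖⟪A x, y⟫_ℂ‖ * ‖⟪A y, x⟫_ℂ‖ ≤ (⟪A x, x⟫_ℂ).re * (⟪A y, y⟫_ℂ).re :=
    fun x y => InnerProductSpace.Core.inner_mul_inner_self_le (𝕜 := ℂ) (F := H) (c := c) x y
  have hCS' : ∀ x y : H, (⟪A x, y⟫_ℂ).re ^ 2 ≤ (⟪A x, x⟫_ℂ).re * (⟪A y, y⟫_ℂ).re := by
    intro x y
    have h1 : (⟪A x, y⟫_ℂ).re ^ 2 ≤ ‖⟪A x, y⟫_ℂ‖ * ‖⟪A y, x⟫_ℂ‖ := by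
      have e : ‖⟪A y, x⟫_ℂ‖ = ‖⟪A x, y⟫_ℂ‖ := by
        rw [← inner_conj_symm, RCLike.norm_conj, hsymm]
      rw [e, ← sq]
      have := Complex.abs_re_le_norm ⟪A x, y⟫_ℂ
      calc (⟪A x, y⟫_ℂ).re ^ 2 = |(⟪A x, y⟫_ℂ).re| ^ 2 := (sq_abs _).symm
        _ ≤ ‖⟪A x, y⟫_ℂ‖ ^ 2 := by
            apply pow_le_pow_left₀ (abs_nonneg _)
            exact this
    exact h1.trans (hCS x y)
  have hsym' : ∀ y : H, A (T y) = T.adjoint (A y) := fun y =>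
    congrArg (fun S : H →L[ℂ] H => S y) hsym
  have hpow : ∀ (m : ℕ) (y : H), A ((T ^ m) y) = ((T.adjoint) ^ m) (A y) := by
    intro m
    induction m with
    | zero => intro y; simp
    | succ n ih =>
      intro y
      rw [pow_succ, pow_succ, ContinuousLinearMap.mul_apply, ContinuousLinearMap.mul_apply,
        ih, hsym']
  have hadjpow : ∀ m : ℕ, (T.adjoint) ^ m = (T ^ m).adjoint := fun m => by
    rw [← ContinuousLinearMap.star_eq_adjoint, ← ContinuousLinearMap.star_eq_adjoint, star_pow]
  refine ⟨‖T‖ ^ 2 + 1, by positivity, ?_⟩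
  intro x
  set a : ℕ → ℝ := fun m => (⟪A ((T ^ m) x), (T ^ m) x⟫_ℂ).re with ha_def
  have ha0 : ∀ m, 0 ≤ a m := fun m => hApos _
  have ha0eq : a 0 = (⟪A x, x⟫_ℂ).re := by simp [ha_def]
  have ha1eq : a 1 = (⟪A (T x), T x⟫_ℂ).re := by simp [ha_def]
  have hra : ∀ m, a m = (⟪A x, (T ^ (2 * m)) x⟫_ℂ).re := by
    intro m
    show (⟪A ((T ^ m) x), (T ^ m) x⟫_ℂ).re = _
    rw [hpow, hadjpow, ContinuousLinearMap.adjoint_inner_left, two_mul, pow_add,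
      ContinuousLinearMap.mul_apply]
  have hsq : ∀ m, a m ^ 2 ≤ a 0 * a (2 * m) := by
    intro m
    have h1 := hCS' x ((T ^ (2 * m)) x)
    rw [← hra m] at h1
    rw [ha0eq]
    exact h1
  have hiter : ∀ n : ℕ, a 1 ^ (2 ^ n) ≤ a 0 ^ (2 ^ n - 1) * a (2 ^ n) := by
    intro n
    induction n with
    | zero => simp
    | succ n ih =>
      have e1 : 2 * (2 ^ n - 1) + 1 = 2 ^ (n + 1) - 1 := by
        have := Nat.one_le_two_pow (n := n); omega
      calc a 1 ^ 2 ^ (n + 1) = (a 1 ^ 2 ^ n) ^ 2 := by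
            rw [← pow_mul, pow_succ]
        _ ≤ (a 0 ^ (2 ^ n - 1) * a (2 ^ n)) ^ 2 :=
            pow_le_pow_left₀ (pow_nonneg (ha0 1) _) ih 2
        _ = a 0 ^ (2 * (2 ^ n - 1)) * a (2 ^ n) ^ 2 := by
            rw [mul_pow, ← pow_mul, mul_comm (2 ^ n - 1) 2]
        _ ≤ a 0 ^ (2 * (2 ^ n - 1)) * (a 0 * a (2 * 2 ^ n)) :=
            mul_le_mul_of_nonneg_left (hsq _) (pow_nonneg (ha0 0) _)
        _ = a 0 ^ (2 ^ (n + 1) - 1) * a (2 ^ (n + 1)) := by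
            rw [show 2 * 2 ^ n = 2 ^ (n + 1) by rw [pow_succ]; ring, ← e1]
            rw [pow_succ]
            ring
  set K : ℝ := ‖A‖ * ‖x‖ ^ 2 with hK_def
  have hTm : ∀ m : ℕ, ‖(T ^ m) x‖ ≤ ‖T‖ ^ m * ‖x‖ := by
    intro m
    induction m with
    | zero => simp
    | succ n ih =>
      rw [pow_succ', ContinuousLinearMap.mul_apply]
      calc ‖T ((T ^ n) x)‖ ≤ ‖T‖ * ‖(T ^ n) x‖ := T.le_opNorm _
        _ ≤ ‖T‖ * (‖T‖ ^ n * ‖x‖) := mul_le_mul_of_nonneg_left ih (norm_nonneg T)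
        _ = ‖T‖ ^ (n + 1) * ‖x‖ := by rw [pow_succ]; ring
  have hbound : ∀ m : ℕ, a m ≤ K * (‖T‖ ^ 2) ^ m := by
    intro m
    have h1 : a m ≤ ‖A ((T ^ m) x)‖ * ‖(T ^ m) x‖ := by
      calc a m ≤ ‖⟪A ((T ^ m) x), (T ^ m) x⟫_ℂ‖ := by
            rw [ha_def]
            exact (Complex.abs_re_le_norm _).trans'
              (le_abs_self _)
        _ ≤ ‖A ((T ^ m) x)‖ * ‖(T ^ m) x‖ := norm_inner_le_norm _ _
    have h2 : ‖A ((T ^ m) x)‖ ≤ ‖A‖ * ‖(T ^ m) x‖ := A.le_opNorm _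
    have h3 := hTm m
    calc a m ≤ ‖A‖ * ‖(T ^ m) x‖ * ‖(T ^ m) x‖ :=
          h1.trans (mul_le_mul_of_nonneg_right h2 (norm_nonneg _))
      _ ≤ ‖A‖ * (‖T‖ ^ m * ‖x‖) * (‖T‖ ^ m * ‖x‖) := by
          apply mul_le_mul (mul_le_mul_of_nonneg_left h3 (norm_nonneg A)) h3 (norm_nonneg _)
          positivity
      _ = K * (‖T‖ ^ 2) ^ m := by
          rw [hK_def, ← pow_mul, mul_comm 2 m, pow_mul]
          ring
  -- main conclusion
  rw [← ha1eq, ← ha0eq]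
  rcases eq_or_lt_of_le (ha0 0) with h0 | h0
  · -- a 0 = 0
    have h1 : a 1 ^ 2 ≤ 0 := by
      have := hsq 1
      rw [← h0, zero_mul] at this
      exact this
    have : a 1 = 0 := by nlinarith [ha0 1]
    rw [this, ← h0, mul_zero]
  · -- a 0 > 0
    rcases eq_or_lt_of_le (norm_nonneg T) with hT | hT
    · -- T = 0
      have hT0 : T = 0 := by rwa [eq_comm, norm_eq_zero] at hT
      have : a 1 = 0 := by
        rw [ha1eq, hT0]
        simp
      rw [this]
      positivity
    · -- main case
      have key : a 1 ≤ ‖T‖ ^ 2 * a 0 := by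
        by_contra hlt
        push_neg at hlt
        set r : ℝ := a 1 / (‖T‖ ^ 2 * a 0) with hr_def
        have hr : 1 < r := (one_lt_div (by positivity)).2 hlt
        have hK : ∀ n : ℕ, r ^ (2 ^ n) ≤ K / a 0 := by
          intro n
          have e1 : 2 ^ n - 1 + 1 = 2 ^ n := by
            have := Nat.one_le_two_pow (n := n); omega
          have h1 : a 1 ^ 2 ^ n ≤ a 0 ^ (2 ^ n - 1) * (K * (‖T‖ ^ 2) ^ 2 ^ n) :=
            (hiter n).trans (mul_le_mul_of_nonneg_left (hbound _) (pow_nonneg (ha0 0) _))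
          have h2 : a 1 ^ 2 ^ n * a 0 ≤ K * (‖T‖ ^ 2 * a 0) ^ 2 ^ n := by
            calc a 1 ^ 2 ^ n * a 0 ≤ a 0 ^ (2 ^ n - 1) * (K * (‖T‖ ^ 2) ^ 2 ^ n) * a 0 :=
                  mul_le_mul_of_nonneg_right h1 (le_of_lt h0)
              _ = K * (‖T‖ ^ 2 * a 0) ^ 2 ^ n := by
                  have e2 : a 0 ^ 2 ^ n = a 0 ^ (2 ^ n - 1) * a 0 := by
                    rw [← pow_succ, e1]
                  rw [mul_pow, e2]
                  ring
          rw [hr_def, div_pow, div_le_div_iff₀ (by positivity) h0]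
          exact h2
        obtain ⟨n, hn⟩ := pow_unbounded_of_one_lt (K / a 0) hr
        have hle : r ^ n ≤ r ^ (2 ^ n) :=
          pow_le_pow_right₀ (le_of_lt hr) (Nat.le_of_lt (Nat.lt_two_pow_self (n := n)))
        exact absurd (hle.trans (hK n)) (not_le.2 hn)
      calc a 1 ≤ ‖T‖ ^ 2 * a 0 := key
        _ ≤ (‖T‖ ^ 2 + 1) * a 0 := by nlinarith [ha0 0]
end
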